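/- Let γ ∈ ℤ, n ∈ ℚ_p, j ∈ {1,…,p−1}, and let a, b ∈ ℚ_p satisfy |a − 1|_p ≤ p^{-1} and |p^γ b − n(1−a)|_p ≤ p^{-1}. Then G(a,b)ψ_{γ n j} = ψ_{γ n j} (equality of functions ℚ_p → ℂ). -/

import Mathlib

open MeasureTheory

/-- Action of the `p`-adic affine group on complex-valued functions:
`(G(a,b)f)(x) = |a|_p^{-1/2} f((x-b)/a)`. -/
noncomputable def Gact (p : ℕ) [Fact p.Prime] (a b : ℚ_[p]) (f : ℚ_[p] → ℂ) : ℚ_[p] → ℂ :=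
  fun x => ((‖a‖ ^ (-(1/2) : ℝ) : ℝ) : ℂ) * f ((x - b) / a)

/-- `Ω(|x|_p)`: the indicator function of the unit ball `ℤ_p`. -/
noncomputable def Omega (p : ℕ) [Fact p.Prime] : ℚ_[p] → ℂ :=
  fun x => if ‖x‖ ≤ 1 then 1 else 0

/-- `R_σ`: the set of finite sums `∑_{l=-δ}^{σ-1} n_l p^l` with digits `n_l ∈ {0,…,p-1}`,
a complete set of representatives of `ℚ_p / p^σ ℤ_p`. -/
def Rset (p : ℕ) [Fact p.Prime] (σ : ℤ) : Set ℚ_[p] :=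
  { x | ∃ (δ : ℕ) (d : ℤ → ℕ), (∀ l, d l < p) ∧
      x = ∑ l ∈ Finset.Icc (-(δ : ℤ)) (σ - 1), (d l : ℚ_[p]) * (p : ℚ_[p]) ^ l }

/-- The `p`-adic wavelet `ψ_{γ n j}(x) = p^{-γ/2} χ(p⁻¹ j (p^γ x - n)) Ω(|p^γ x - n|_p)`. -/
noncomputable def wavelet (p : ℕ) [Fact p.Prime] (χ : ℚ_[p] → ℂ) (γ : ℤ) (n : ℚ_[p]) (j : ℕ) :
    ℚ_[p] → ℂ :=
  fun x => (((p : ℝ) ^ (-(γ : ℝ) / 2) : ℝ) : ℂ) *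
    χ ((p : ℚ_[p])⁻¹ * (j : ℚ_[p]) * ((p : ℚ_[p]) ^ γ * x - n)) *
    Omega p ((p : ℚ_[p]) ^ γ * x - n)

/-- The basic `p`-adic wavelet `ψ(x) = χ(p⁻¹ x) Ω(|x|_p)`. -/
noncomputable def psiw (p : ℕ) [Fact p.Prime] (χ : ℚ_[p] → ℂ) : ℚ_[p] → ℂ :=
  fun x => χ ((p : ℚ_[p])⁻¹ * x) * Omega p x

set_option maxHeartbeats 1000000 in
theorem stmt_4 (p : ℕ) [Fact p.Prime] (χ : ℚ_[p] → ℂ)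
    (hχ_add : ∀ x y : ℚ_[p], χ (x + y) = χ x * χ y)
    (hχ_norm : ∀ x : ℚ_[p], ‖χ x‖ = 1)
    (hχ_triv : ∀ x : ℚ_[p], ‖x‖ ≤ 1 → χ x = 1)
    (hχ_nontriv : χ ((p : ℚ_[p])⁻¹) ≠ 1)
    (γ : ℤ) (n : ℚ_[p]) (j : ℕ) (hj : 1 ≤ j ∧ j ≤ p - 1)
    (a b : ℚ_[p]) (ha : ‖a - 1‖ ≤ (p : ℝ) ^ (-1 : ℤ))
    (hb : ‖(p : ℚ_[p]) ^ γ * b - n * (1 - a)‖ ≤ (p : ℝ) ^ (-1 : ℤ)) :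
    Gact p a b (wavelet p χ γ n j) = wavelet p χ γ n j := by
  have hp1 : (1:ℝ) < p := by exact_mod_cast (Fact.out : p.Prime).one_lt
  have hp0 : (0:ℝ) < p := by linarith
  have hplt : ((p:ℝ)) ^ (-1 : ℤ) < 1 := by
    rw [zpow_neg, zpow_one]; exact inv_lt_one_of_one_lt₀ hp1
  have hple : ((p:ℝ)) ^ (-1 : ℤ) ≤ 1 := hplt.le
  have ha1 : ‖a‖ = 1 := by
    have h : a = 1 + (a - 1) := by ring
    have hlt : ‖a - 1‖ < ‖(1:ℚ_[p])‖ := by simpa using lt_of_le_of_lt ha hplt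
    rw [h, Padic.add_eq_max_of_ne (by simpa using hlt.ne'), norm_one]
    exact max_eq_left (by simpa using hlt.le)
  have ha0 : a ≠ 0 := by intro h; rw [h] at ha1; simp at ha1
  have hj1 : ‖(j : ℚ_[p])‖ ≤ 1 := by exact_mod_cast Padic.norm_int_le_one (j : ℤ)
  have hpinv : ‖((p:ℚ_[p]))⁻¹‖ = (p:ℝ) := by
    rw [norm_inv, Padic.norm_p, inv_inv]
  funext x
  simp only [Gact, wavelet, Omega]
  set u : ℚ_[p] := (p : ℚ_[p]) ^ γ * x - n with hu
  set c : ℚ_[p] := (p : ℚ_[p]) ^ γ * b - n * (1 - a) with hc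
  have harg : (p : ℚ_[p]) ^ γ * ((x - b) / a) - n = (u - c) / a := by
    field_simp
    ring
  have hnorm_arg : ‖(u - c) / a‖ = ‖u - c‖ := by rw [norm_div, ha1, div_one]
  have hA : (((‖a‖ ^ (-(1/2) : ℝ) : ℝ)) : ℂ) = 1 := by
    rw [ha1, Real.one_rpow]; norm_num
  rw [harg, hA, one_mul]
  by_cases hult : ‖u‖ ≤ 1
  · -- both indicators are 1, characters agree
    have husub : ‖u - c‖ ≤ 1 := by
      calc ‖u - c‖ ≤ max ‖u‖ ‖(-c)‖ := by
            have h := Padic.nonarchimedean u (-c)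
            rwa [← sub_eq_add_neg] at h
        _ ≤ 1 := max_le hult (by rw [norm_neg]; exact hb.trans hple)
    have hΩ1 : ‖(u - c)/a‖ ≤ 1 := by rw [hnorm_arg]; exact husub
    have hdiff : ‖(u - c)/a - u‖ ≤ (p:ℝ) ^ (-1:ℤ) := by
      have he : (u - c)/a - u = (u * (1 - a) - c) / a := by field_simp; ring
      rw [he, norm_div, ha1, div_one]
      calc ‖u * (1 - a) - c‖ ≤ max ‖u * (1 - a)‖ ‖(-c)‖ := by
            have h := Padic.nonarchimedean (u * (1 - a)) (-c)
            rwa [← sub_eq_add_neg] at h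
        _ ≤ (p:ℝ) ^ (-1:ℤ) := by
            apply max_le
            · rw [norm_mul]
              calc ‖u‖ * ‖1 - a‖ ≤ 1 * ((p:ℝ) ^ (-1:ℤ)) := by
                    apply mul_le_mul hult ?_ (norm_nonneg _) (by norm_num)
                    rw [show (1:ℚ_[p]) - a = -(a-1) by ring, norm_neg]; exact ha
                _ = (p:ℝ) ^ (-1:ℤ) := one_mul _
            · rw [norm_neg]; exact hb
    have hchar : χ ((p : ℚ_[p])⁻¹ * (j : ℚ_[p]) * ((u - c)/a))
        = χ ((p : ℚ_[p])⁻¹ * (j : ℚ_[p]) * u) := by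
      have hD : ‖(p : ℚ_[p])⁻¹ * (j : ℚ_[p]) * ((u - c)/a - u)‖ ≤ 1 := by
        rw [norm_mul, norm_mul, hpinv]
        calc (p:ℝ) * ‖(j : ℚ_[p])‖ * ‖(u - c)/a - u‖
            ≤ (p:ℝ) * 1 * ((p:ℝ) ^ (-1:ℤ)) := by
              apply mul_le_mul ?_ hdiff (norm_nonneg _) (by positivity)
              exact mul_le_mul_of_nonneg_left hj1 hp0.le
          _ = 1 := by rw [mul_one, zpow_neg, zpow_one, mul_inv_cancel₀ hp0.ne']
      have : χ ((p : ℚ_[p])⁻¹ * (j : ℚ_[p]) * ((u - c)/a))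
          = χ ((p : ℚ_[p])⁻¹ * (j : ℚ_[p]) * u) *
            χ ((p : ℚ_[p])⁻¹ * (j : ℚ_[p]) * ((u - c)/a - u)) := by
        rw [← hχ_add]; ring_nf
      rw [this, hχ_triv _ hD, mul_one]
    rw [hchar, if_pos hΩ1, if_pos hult]
  · -- both indicators are 0
    have husub : ‖u - c‖ = ‖u‖ := by
      have hne : ‖u‖ ≠ ‖(-c)‖ := by
        rw [norm_neg]
        intro h
        exact hult (h ▸ (hb.trans hple))
      rw [sub_eq_add_neg, Padic.add_eq_max_of_ne hne, norm_neg,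
        max_eq_left (le_of_lt (lt_of_le_of_lt (hb.trans hple) (lt_of_not_ge hult)))]
    have : ¬ ‖(u - c)/a‖ ≤ 1 := by rw [hnorm_arg, husub]; exact hult
    rw [if_neg this, if_neg hult, mul_zero, mul_zero]
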